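/- For β = 1 and α ∉ {0,1}, A(n, α, 1) has entries A_{uv} = C(n-v, u-1) α^{u-1} (1-α)^{n-u-v+1} when u ≤ n-v+1 and 0 when u > n-v+1; consequently det A(n,α,1) = (-α)^{n(n-1)/2}. -/
import Mathlib


open Finset

/-- Entry `A_{u+1, v+1}` (0-indexed) of the degree-distribution transition matrix:
the probability that a vertex of true degree `v` in an `n`-node network is observed
with degree `u`, when present links are deleted with probability `β` and absent
links are added with probability `α`. -/
noncomputable def Aent (n : ℕ) (α β : ℝ) (u v : ℕ) : ℝ :=
  ∑ i ∈ Finset.Icc (v - u) (min v (n - 1 - u)),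
    (v.choose i : ℝ) * (1 - β) ^ (v - i) * β ^ i *
      ((n - 1 - v).choose (i + u - v) : ℝ) * α ^ (i + u - v) * (1 - α) ^ (n - 1 - u - i)

/-- The `n × n` transition matrix `A(n, α, β)`. -/
noncomputable def Amat (n : ℕ) (α β : ℝ) : Matrix (Fin n) (Fin n) ℝ :=
  fun u v => Aent n α β u v

open Equiv

lemma finRotate_mul_revPerm (n : ℕ) :
    finRotate (n + 1) * (Fin.revPerm : Perm (Fin (n + 1))) =
      Equiv.Perm.decomposeFin.symm (0, (Fin.revPerm : Perm (Fin n))) := by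
  ext i
  refine Fin.cases ?_ (fun x => ?_) i
  · simp [Fin.rev_zero, coe_finRotate]
  · simp only [Perm.mul_apply, Fin.revPerm_apply, Fin.rev_succ,
      Equiv.Perm.decomposeFin_symm_apply_succ, swap_self, Equiv.refl_apply]
    simp [coe_finRotate, Fin.val_rev, Fin.ext_iff]

lemma sign_revPerm : ∀ n : ℕ,
    Equiv.Perm.sign (Fin.revPerm : Perm (Fin n)) = (-1) ^ (n * (n - 1) / 2)
  | 0 => by decide
  | n + 1 => by
    have h := finRotate_mul_revPerm n
    have h2 : (Fin.revPerm : Perm (Fin (n + 1))) =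
        (finRotate (n + 1))⁻¹ * Equiv.Perm.decomposeFin.symm (0, (Fin.revPerm : Perm (Fin n))) := by
      rw [← h]; group
    rw [h2, map_mul, map_inv, sign_finRotate, Equiv.Perm.decomposeFin.symm_sign,
      sign_revPerm n, Nat.triangle_succ]
    simp [pow_add, mul_comm]

lemma Aent_one (n : ℕ) (α : ℝ) (u v : Fin n) :
    Amat n α 1 u v =
      if (u : ℕ) + (v : ℕ) ≤ n - 1 then
        ((n - 1 - (v : ℕ)).choose (u : ℕ) : ℝ) * α ^ (u : ℕ) *
          (1 - α) ^ (n - 1 - (u : ℕ) - (v : ℕ))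
      else 0 := by
  have hu : (u : ℕ) < n := u.isLt
  have hv : (v : ℕ) < n := v.isLt
  rw [Amat, Aent]
  by_cases h : (u : ℕ) + (v : ℕ) ≤ n - 1
  · rw [if_pos h]
    have hmin : min (v : ℕ) (n - 1 - u) = v := by omega
    rw [hmin, Finset.sum_eq_single (v : ℕ)]
    · rw [Nat.add_sub_cancel_left, Nat.choose_self, Nat.sub_self]
      norm_num
    · intro i hi hne
      have h1 : i ≤ (v : ℕ) := (Finset.mem_Icc.mp hi).2
      have hz : (1 - (1 : ℝ)) ^ ((v : ℕ) - i) = 0 := by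
        rw [sub_self, zero_pow]; omega
      simp only [hz, mul_zero, zero_mul]
    · intro hnm
      exact absurd (Finset.mem_Icc.mpr ⟨by omega, le_rfl⟩) hnm
  · rw [if_neg h]
    apply Finset.sum_eq_zero
    intro i hi
    have h2 : i ≤ min (v : ℕ) (n - 1 - u) := (Finset.mem_Icc.mp hi).2
    have hz : (1 - (1 : ℝ)) ^ ((v : ℕ) - i) = 0 := by
      rw [sub_self, zero_pow]; omega
    simp only [hz, mul_zero, zero_mul]

theorem Amat_beta_one (n : ℕ) (hn : 1 ≤ n) (α : ℝ) (hα : α ∈ Set.Ioo (0 : ℝ) 1) :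
    (∀ u v : Fin n, Amat n α 1 u v =
      if (u : ℕ) + (v : ℕ) ≤ n - 1 then
        ((n - 1 - (v : ℕ)).choose (u : ℕ) : ℝ) * α ^ (u : ℕ) *
          (1 - α) ^ (n - 1 - (u : ℕ) - (v : ℕ))
      else 0) ∧
    (Amat n α 1).det = (-α) ^ (n * (n - 1) / 2) := by
  refine ⟨fun u v => Aent_one n α u v, ?_⟩
  have htri : ((Amat n α 1).submatrix id Fin.revPerm).BlockTriangular id := by
    intro u v hlt
    simp only [Matrix.submatrix_apply, id_eq, Fin.revPerm_apply]
    rw [Aent_one, if_neg]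
    have := Fin.val_rev v
    have hv : (v : ℕ) < n := v.isLt
    have hu : (u : ℕ) < n := u.isLt
    have hlt' : (v : ℕ) < (u : ℕ) := hlt
    simp only [Fin.val_rev]
    omega
  have hdet := Matrix.det_permute' Fin.revPerm (Amat n α 1)
  rw [Matrix.det_of_upperTriangular htri] at hdet
  have hdiag : ∀ u : Fin n, ((Amat n α 1).submatrix id Fin.revPerm) u u = α ^ (u : ℕ) := by
    intro u
    have hu : (u : ℕ) < n := u.isLt
    simp only [Matrix.submatrix_apply, id_eq, Fin.revPerm_apply]
    rw [Aent_one, if_pos (by simp only [Fin.val_rev]; omega)]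
    have h1 : n - 1 - ((u.rev : ℕ)) = (u : ℕ) := by simp only [Fin.val_rev]; omega
    have h2 : n - 1 - (u : ℕ) - ((u.rev : ℕ)) = 0 := by simp only [Fin.val_rev]; omega
    rw [h1, h2, Nat.choose_self]
    norm_num
  rw [Finset.prod_congr rfl fun u _ => hdiag u] at hdet
  have hprod : ∏ u : Fin n, α ^ (u : ℕ) = α ^ (n * (n - 1) / 2) := by
    rw [Finset.prod_pow_eq_pow_sum]
    congr 1
    rw [Fin.sum_univ_eq_sum_range (fun i => i) n, Finset.sum_range_id]
  rw [hprod, sign_revPerm n] at hdet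
  have hsign : (((-1 : ℤˣ) ^ (n * (n - 1) / 2) : ℤˣ) : ℝ) = (-1 : ℝ) ^ (n * (n - 1) / 2) := by
    push_cast
    norm_num
  have : (-1 : ℝ) ^ (n * (n - 1) / 2) * (Amat n α 1).det = α ^ (n * (n - 1) / 2) := by
    rw [← hsign]
    exact_mod_cast hdet.symm
  have hneg : ((-1 : ℝ) ^ (n * (n - 1) / 2)) * ((-1 : ℝ) ^ (n * (n - 1) / 2)) = 1 := by
    rw [← pow_add, Even.neg_one_pow ⟨_, rfl⟩]
  calc (Amat n α 1).det = ((-1 : ℝ) ^ (n * (n - 1) / 2) * ((-1 : ℝ) ^ (n * (n - 1) / 2))) * (Amat n α 1).det := by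
        rw [hneg, one_mul]
      _ = (-1 : ℝ) ^ (n * (n - 1) / 2) * α ^ (n * (n - 1) / 2) := by
        rw [mul_assoc, this]
      _ = (-α) ^ (n * (n - 1) / 2) := (neg_pow α _).symm
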